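/- The map Φ : (ℝ × ℝ) × (ℝ × ℝ) × (ℝ × ℝ) → ℝ⁴ × ℝ⁴ defined by Φ((x_T, y_T), (x_M, z_M), (y_B, z_B)) = ( (1 + (x_T−x_M)² + y_T² + z_M²)^(−1/2) • (1, x_T−x_M, y_T, −z_M), (1 + x_M² + y_B² + (z_M−z_B)²)^(−1/2) • (1, x_M, −y_B, z_M−z_B) ) is injective. -/

import Mathlib

noncomputable def pt (a b c d : ℝ) : EuclideanSpace ℝ (Fin 4) :=
  (WithLp.equiv 2 (Fin 4 → ℝ)).symm ![a, b, c, d]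

lemma pt_apply (a b c d : ℝ) (i : Fin 4) : pt a b c d i = ![a,b,c,d] i := rfl

lemma key {r s a b c a' b' c' : ℝ} (hr : 0 < r) (h : r • pt 1 a b c = s • pt 1 a' b' c') :
    a = a' ∧ b = b' ∧ c = c' := by
  have h0 := congrArg (fun v => v 0) h
  have h1 := congrArg (fun v => v 1) h
  have h2 := congrArg (fun v => v 2) h
  have h3 := congrArg (fun v => v 3) h
  simp only [PiLp.smul_apply, pt_apply, smul_eq_mul] at h0 h1 h2 h3
  norm_num [Matrix.cons_val_one, Matrix.head_cons] at h0 h1 h2 h3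
  subst h0
  exact ⟨mul_left_cancel₀ hr.ne' h1, mul_left_cancel₀ hr.ne' h2, mul_left_cancel₀ hr.ne' h3⟩

/-- the explicit local form `Φ` of the Gauss-type map near a triple point
(the map `L′` in the proof of Lemma 3.5) is injective. -/
theorem gauss_map_local_form_injective :
    Function.Injective (fun p : (ℝ × ℝ) × (ℝ × ℝ) × (ℝ × ℝ) =>
      (((1 + (p.1.1 - p.2.1.1) ^ 2 + p.1.2 ^ 2 + p.2.1.2 ^ 2) ^ (-(1 : ℝ) / 2) •
          pt 1 (p.1.1 - p.2.1.1) p.1.2 (-p.2.1.2),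
        (1 + p.2.1.1 ^ 2 + p.2.2.1 ^ 2 + (p.2.1.2 - p.2.2.2) ^ 2) ^ (-(1 : ℝ) / 2) •
          pt 1 p.2.1.1 (-p.2.2.1) (p.2.1.2 - p.2.2.2)) :
        EuclideanSpace ℝ (Fin 4) × EuclideanSpace ℝ (Fin 4))) := by
  rintro ⟨⟨xT, yT⟩, ⟨xM, zM⟩, ⟨yB, zB⟩⟩ ⟨⟨xT', yT'⟩, ⟨xM', zM'⟩, ⟨yB', zB'⟩⟩ h
  simp only [Prod.mk.injEq] at h
  obtain ⟨hA, hB⟩ := h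
  have pos1 : (0:ℝ) < (1 + (xT - xM) ^ 2 + yT ^ 2 + zM ^ 2) ^ (-(1:ℝ)/2) :=
    Real.rpow_pos_of_pos (by positivity) _
  have pos2 : (0:ℝ) < (1 + xM ^ 2 + yB ^ 2 + (zM - zB) ^ 2) ^ (-(1:ℝ)/2) :=
    Real.rpow_pos_of_pos (by positivity) _
  obtain ⟨e1, e2, e3⟩ := key pos1 hA
  obtain ⟨f1, f2, f3⟩ := key pos2 hB
  have hzM : zM = zM' := by have := neg_injective e3; linarith
  have hyB : yB = yB' := by have := neg_injective f2; linarith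
  simp only [Prod.mk.injEq]
  refine ⟨⟨by linarith, e2⟩, ⟨f1, hzM⟩, hyB, by linarith⟩
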